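/- Let k₀ ≥ 0 and let φ be a non-negative, non-increasing function on the half line [k₀, ∞). Suppose there exist constants c, α₁, α₂ > 0 and δ > 1 such that φ(h) ≤ c·((h − k)^{−α₁} + (h − k)^{−α₂})·φ(k)^δ for all h > k ≥ k₀. Then there exists ς > 0 such that φ(t) = 0 for every t ≥ k₀ + ς. -/

import Mathlib

/-- Lemma 2.1 (two-exponent De Giorgi–Stampacchia iteration lemma): let `k₀ ≥ 0` and let
`φ` be non-negative and non-increasing on `[k₀, ∞)`.  If there are constants
`c, α₁, α₂ > 0` and `δ > 1` with
`φ(h) ≤ c ((h - k)^(-α₁) + (h - k)^(-α₂)) φ(k)^δ` for all `h > k ≥ k₀`,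
then there is `ς > 0` with `φ(t) = 0` for every `t ≥ k₀ + ς`. -/
theorem degiorgi_iteration (φ : ℝ → ℝ) (k₀ : ℝ) (hk₀ : 0 ≤ k₀)
    (hnonneg : ∀ t, k₀ ≤ t → 0 ≤ φ t)
    (hmono : ∀ k h, k₀ ≤ k → k ≤ h → φ h ≤ φ k)
    (c α₁ α₂ δ : ℝ) (hc : 0 < c) (hα₁ : 0 < α₁) (hα₂ : 0 < α₂) (hδ : 1 < δ)
    (hiter : ∀ h k, k₀ ≤ k → k < h →
      φ h ≤ c * ((h - k) ^ (-α₁) + (h - k) ^ (-α₂)) * φ k ^ δ) :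
    ∃ ς : ℝ, 0 < ς ∧ ∀ t, k₀ + ς ≤ t → φ t = 0 := by
  set M := φ k₀ with hMdef
  have hM0 : 0 ≤ M := hnonneg k₀ le_rfl
  rcases eq_or_lt_of_le hM0 with hM0' | hMpos
  · refine ⟨1, one_pos, fun t ht => ?_⟩
    have h1 : φ t ≤ M := hmono k₀ t le_rfl (by linarith)
    have h2 : 0 ≤ φ t := hnonneg t (by linarith)
    linarith
  -- main case : M > 0
  set A := max α₁ α₂ with hAdef
  set a := min α₁ α₂ with hadef
  have haA : 0 < a := lt_min hα₁ hα₂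
  have hA : 0 < A := lt_of_lt_of_le hα₁ (le_max_left _ _)
  have hδ1 : 0 < δ - 1 := by linarith
  set β := A / (δ - 1) with hβdef
  have hβ : 0 < β := div_pos hA hδ1
  have hβδ : β * δ = β + A := by
    have h : β * (δ - 1) = A := by
      rw [hβdef]; exact div_mul_cancel₀ A (ne_of_gt hδ1)
    linarith
  set P := 2 * c * M ^ (δ - 1) with hPdef
  have hP : 0 < P := by
    have := Real.rpow_pos_of_pos hMpos (δ - 1)
    positivity
  set K := P * 2 ^ (β + A) with hKdef
  have hK : 0 < K := by
    have := Real.rpow_pos_of_pos (by norm_num : (0:ℝ) < 2) (β + A)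
    positivity
  set ς := max 1 (K ^ a⁻¹) with hςdef
  have hς1 : (1:ℝ) ≤ ς := le_max_left _ _
  have hςpos : 0 < ς := lt_of_lt_of_le one_pos hς1
  have hςK : K ≤ ς ^ a := by
    calc K = (K ^ a⁻¹) ^ a := (Real.rpow_inv_rpow hK.le (ne_of_gt haA)).symm
    _ ≤ ς ^ a := Real.rpow_le_rpow (Real.rpow_nonneg hK.le _) (le_max_right _ _) haA.le
  set θ : ℝ := 2 ^ (-β) with hθdef
  have hθpos : 0 < θ := Real.rpow_pos_of_pos two_pos _
  have hθ1 : θ < 1 := by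
    have : (2:ℝ) ^ (-β) < 2 ^ (0:ℝ) :=
      Real.rpow_lt_rpow_of_exponent_lt one_lt_two (by linarith)
    simpa using this
  have hθn : ∀ m : ℕ, θ ^ m = (2:ℝ) ^ (-β * (m:ℝ)) := by
    intro m
    rw [hθdef, ← Real.rpow_natCast ((2:ℝ) ^ (-β)) m, ← Real.rpow_mul (by norm_num)]
  -- the level sequence
  set f : ℕ → ℝ := fun n => k₀ + ς * (1 - (2:ℝ)⁻¹ ^ n) with hfdef
  have hf0 : ∀ n, k₀ ≤ f n := by
    intro n
    have h1 : (2:ℝ)⁻¹ ^ n ≤ 1 := pow_le_one₀ (by norm_num) (by norm_num)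
    have : 0 ≤ ς * (1 - (2:ℝ)⁻¹ ^ n) := mul_nonneg hςpos.le (by linarith)
    simp only [hfdef]; linarith
  have hfle : ∀ n, f n ≤ k₀ + ς := by
    intro n
    have h1 : (0:ℝ) ≤ (2:ℝ)⁻¹ ^ n := by positivity
    have : ς * (1 - (2:ℝ)⁻¹ ^ n) ≤ ς * 1 :=
      mul_le_mul_of_nonneg_left (by linarith) hςpos.le
    simp only [hfdef]; linarith
  have hfd : ∀ n, f (n+1) - f n = ς * (2:ℝ)⁻¹ ^ (n+1) := by
    intro n
    simp only [hfdef]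
    rw [pow_succ]
    ring
  have hflt : ∀ n, f n < f (n+1) := by
    intro n
    have h1 : 0 < ς * (2:ℝ)⁻¹ ^ (n+1) := by positivity
    have h2 := hfd n
    rw [← sub_pos, h2]
    exact h1
  -- key induction
  have main : ∀ n, φ (f n) ≤ M * θ ^ n := by
    intro n
    induction n with
    | zero => simp [hfdef, hMdef]
    | succ n ih =>
      have hd : (0:ℝ) < ς * (2:ℝ)⁻¹ ^ (n+1) := by positivity
      have hstep := hiter (f (n+1)) (f n) (hf0 n) (hflt n)
      rw [hfd n] at hstep
      have hφn : 0 ≤ φ (f n) := hnonneg _ (hf0 n)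
      have hMθ : 0 ≤ M * θ ^ n := by positivity
      have hpow : φ (f n) ^ δ ≤ (M * θ ^ n) ^ δ :=
        Real.rpow_le_rpow hφn ih (by linarith)
      have hp : (2:ℝ)⁻¹ ^ (n+1) = (2:ℝ) ^ (-((n:ℝ)+1)) := by
        rw [inv_pow, ← Real.rpow_natCast (2:ℝ) (n+1), ← Real.rpow_neg (by norm_num)]
        push_cast
        ring_nf
      set B := ς ^ (-a) * (2:ℝ) ^ (A * ((n:ℝ)+1)) with hBdef
      have hBpos : 0 < B := by
        have := Real.rpow_pos_of_pos hςpos (-a)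
        have := Real.rpow_pos_of_pos (by norm_num : (0:ℝ) < 2) (A * ((n:ℝ)+1))
        positivity
      have hbound : ∀ γ : ℝ, a ≤ γ → γ ≤ A →
          (ς * (2:ℝ)⁻¹ ^ (n+1)) ^ (-γ) ≤ B := by
        intro γ hγa hγA
        rw [hp, Real.mul_rpow hςpos.le (by positivity), ← Real.rpow_mul (by norm_num)]
        have h1 : ς ^ (-γ) ≤ ς ^ (-a) :=
          Real.rpow_le_rpow_of_exponent_le hς1 (by linarith)
        have h2 : (2:ℝ) ^ (-((n:ℝ)+1) * -γ) ≤ (2:ℝ) ^ (A * ((n:ℝ)+1)) := by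
          apply Real.rpow_le_rpow_of_exponent_le one_le_two
          have hn : (0:ℝ) ≤ (n:ℝ)+1 := by positivity
          nlinarith
        exact mul_le_mul h1 h2 (by positivity) (by positivity)
      have hb1 := hbound α₁ (min_le_left _ _) (le_max_left _ _)
      have hb2 := hbound α₂ (min_le_right _ _) (le_max_right _ _)
      have hmid : φ (f (n+1)) ≤ c * (2 * B) * (M * θ ^ n) ^ δ := by
        calc φ (f (n+1)) ≤ c * ((ς * (2:ℝ)⁻¹ ^ (n+1)) ^ (-α₁)
              + (ς * (2:ℝ)⁻¹ ^ (n+1)) ^ (-α₂)) * φ (f n) ^ δ := hstep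
        _ ≤ c * (2 * B) * (M * θ ^ n) ^ δ := by
            apply mul_le_mul
            · apply mul_le_mul_of_nonneg_left _ hc.le
              linarith
            · exact hpow
            · exact Real.rpow_nonneg hφn δ
            · positivity
      have eM : M ^ δ = M ^ (δ-1) * M := by
        nth_rewrite 3 [← Real.rpow_one M]
        rw [← Real.rpow_add hMpos]
        norm_num
      have e2 : (M * θ ^ n) ^ δ = M ^ (δ-1) * M * (2:ℝ) ^ (-β * (n:ℝ) * δ) := by
        rw [hθn n, Real.mul_rpow hMpos.le (Real.rpow_nonneg (by norm_num) _),
          ← Real.rpow_mul (by norm_num), eM]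
      have hςa : ς ^ (-a) ≤ K⁻¹ := by
        rw [Real.rpow_neg hςpos.le]
        exact inv_anti₀ hK hςK
      have hKi : P * K⁻¹ = (2:ℝ) ^ (-(β + A)) := by
        rw [hKdef, Real.rpow_neg (by norm_num)]
        rw [mul_inv]
        rw [← mul_assoc, mul_inv_cancel₀ (ne_of_gt hP), one_mul]
      have key : c * (2 * B) * (M * θ ^ n) ^ δ ≤ M * θ ^ (n+1) := by
        have expand : c * (2 * B) * (M * θ ^ n) ^ δ
            = (P * ς ^ (-a)) * (M * ((2:ℝ) ^ (A * ((n:ℝ)+1)) * (2:ℝ) ^ (-β * (n:ℝ) * δ))) := by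
          rw [e2, hBdef, hPdef]; ring
        have step1 : (P * ς ^ (-a)) * (M * ((2:ℝ) ^ (A * ((n:ℝ)+1)) * (2:ℝ) ^ (-β * (n:ℝ) * δ)))
            ≤ (P * K⁻¹) * (M * ((2:ℝ) ^ (A * ((n:ℝ)+1)) * (2:ℝ) ^ (-β * (n:ℝ) * δ))) := by
          apply mul_le_mul_of_nonneg_right
          · exact mul_le_mul_of_nonneg_left hςa hP.le
          · have := Real.rpow_pos_of_pos (by norm_num : (0:ℝ) < 2) (A * ((n:ℝ)+1))
            have := Real.rpow_pos_of_pos (by norm_num : (0:ℝ) < 2) (-β * (n:ℝ) * δ)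
            positivity
        have step2 : (P * K⁻¹) * (M * ((2:ℝ) ^ (A * ((n:ℝ)+1)) * (2:ℝ) ^ (-β * (n:ℝ) * δ)))
            = M * θ ^ (n+1) := by
          rw [hKi, hθn (n+1), ← Real.rpow_add (by norm_num : (0:ℝ) < 2),
            mul_left_comm, ← Real.rpow_add (by norm_num : (0:ℝ) < 2)]
          congr 1
          congr 1
          push_cast
          linear_combination (-(n:ℝ)) * hβδ
        calc c * (2 * B) * (M * θ ^ n) ^ δ
            = (P * ς ^ (-a)) * (M * ((2:ℝ) ^ (A * ((n:ℝ)+1)) * (2:ℝ) ^ (-β * (n:ℝ) * δ))) := expand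
          _ ≤ (P * K⁻¹) * (M * ((2:ℝ) ^ (A * ((n:ℝ)+1)) * (2:ℝ) ^ (-β * (n:ℝ) * δ))) := step1
          _ = M * θ ^ (n+1) := step2
      exact le_trans hmid key
  -- conclude
  refine ⟨ς, hςpos, fun t ht => ?_⟩
  have hφt : φ t ≤ φ (k₀ + ς) := hmono (k₀ + ς) t (by linarith) ht
  have hφt0 : 0 ≤ φ t := hnonneg t (by nlinarith)
  have hlim : Filter.Tendsto (fun n : ℕ => M * θ ^ n) Filter.atTop (nhds 0) := by
    have := tendsto_pow_atTop_nhds_zero_of_lt_one hθpos.le hθ1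
    simpa using this.const_mul M
  have hle : ∀ n, φ (k₀ + ς) ≤ M * θ ^ n := fun n =>
    le_trans (hmono (f n) (k₀ + ς) (hf0 n) (hfle n)) (main n)
  have h1 : φ (k₀ + ς) ≤ 0 := ge_of_tendsto' hlim hle
  have h0 : 0 ≤ φ (k₀ + ς) := hnonneg _ (by linarith)
  linarith
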